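/- In the state machine for (FIFO) work-stealing with weak multiplicity, the suffix invariant is preserved: if a state (t_0, ..., t_{n-1}) (an n-vector of finite strings over the naturals) satisfies that for any two components one is a suffix of the other, then every state reachable by a single transition (Put, Take, or Steal) also satisfies this property. -/

import Mathlib

/-- Labels for the (FIFO) work-stealing with weak multiplicity state machine:
a `Put` of task `x`, an extraction (Take if `i = 0`, Steal otherwise) by
process `i` returning task `x`, or an extraction on an empty component
returning `empty`. -/
inductive WLab (n : ℕ) where
  | put (x : ℕ) : WLab n
  | extract (i : Fin n) (x : ℕ) : WLab n
  | extractEmpty (i : Fin n) : WLab n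

/-- Transition relation of the weak-multiplicity state machine.  States are
`n`-vectors of finite strings over ℕ (head of each string at the front).
`put x` appends `x` to every component.  An extraction by process `i` on
`t_i = x_1 ⋯ x_j · q`, where `x_j · q` is the shortest component (encoded by
`hshort`: some component `p` satisfies `k + |t_p| ≤ |t_i| + 1`, equivalently
`k ≤ j` for `j` determined by the minimum length), returns `x_k` for some
`1 ≤ k ≤ j` and replaces `t_i` by `x_{k+1} ⋯ x_j · q`. -/
inductive WStep {n : ℕ} : (Fin n → List ℕ) → WLab n → (Fin n → List ℕ) → Prop
  | put (s : Fin n → List ℕ) (x : ℕ) :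
      WStep s (.put x) (fun i => s i ++ [x])
  | extract (s : Fin n → List ℕ) (i : Fin n) (k x : ℕ)
      (hk1 : 1 ≤ k) (hk2 : k ≤ (s i).length)
      (hshort : ∃ p, k + (s p).length ≤ (s i).length + 1)
      (hx : (s i)[k - 1]? = some x) :
      WStep s (.extract i x) (Function.update s i ((s i).drop k))
  | extractEmpty (s : Fin n → List ℕ) (i : Fin n) (h : s i = []) :
      WStep s (.extractEmpty i) s

/-- Finite executions of the weak-multiplicity machine from the all-empty
initial state, recording the trace of transitions and the resulting state. -/
inductive WExec {n : ℕ} : List (WLab n) → (Fin n → List ℕ) → Prop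
  | nil : WExec [] (fun _ => [])
  | snoc {tr : List (WLab n)} {s : Fin n → List ℕ} {l : WLab n} {s' : Fin n → List ℕ} :
      WExec tr s → WStep s l s' → WExec (tr ++ [l]) s'

/-- The string of tasks inserted so far: the arguments of `put` transitions,
in order. -/
def winserted {n : ℕ} (tr : List (WLab n)) : List ℕ :=
  tr.filterMap fun l => match l with | .put x => some x | _ => none

/-- the suffix invariant (of any two components, one is a suffix
of the other) is preserved by every single transition of the weak-multiplicity
work-stealing state machine. -/
theorem weak_mult_suffix_invariant_preserved {n : ℕ}
    (s s' : Fin n → List ℕ) (l : WLab n)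
    (hinv : ∀ i j : Fin n, s i <:+ s j ∨ s j <:+ s i)
    (hstep : WStep s l s') :
    ∀ i j : Fin n, s' i <:+ s' j ∨ s' j <:+ s' i := by
  intro i j
  cases hstep with
  | put x =>
    have key : ∀ a b : Fin n, s a <:+ s b → s a ++ [x] <:+ s b ++ [x] := by
      rintro a b ⟨t, ht⟩
      exact ⟨t, by rw [← List.append_assoc, ht]⟩
    rcases hinv i j with h | h
    · exact Or.inl (key i j h)
    · exact Or.inr (key j i h)
  | extract p k x hk1 hk2 hshort hx =>
    have key : ∀ a : Fin n,
        Function.update s p ((s p).drop k) a <:+ s a := by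
      intro a
      by_cases ha : a = p
      · subst ha; simpa [Function.update_self] using List.drop_suffix k (s a)
      · simp [Function.update_of_ne ha]
    rcases hinv i j with h | h
    · exact List.suffix_or_suffix_of_suffix ((key i).trans h) (key j)
    · exact List.suffix_or_suffix_of_suffix (key i) ((key j).trans h)
  | extractEmpty p h => exact hinv i j
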